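/- For every n ≥ 0, η-almost everywhere one has E_η[u_{n+1} | F_n] = ((n+1)/(n+2)) · u_n. -/

import Mathlib

open MeasureTheory Filter
open scoped ENNReal

/-- The Euler path space: a point is an infinite edge path in the Euler graph,
`x n : Fin (n+2)` being the label of the edge chosen from level `n` to level `n+1`. -/
abbrev EulerPath : Type := ∀ n : ℕ, Fin (n + 2)

/-- Vertex labels: `kv x n` is the `k` with the path `x` passing through vertex `(n,k)`.
A label `(x n : ℕ) ≤ kv x n` is a left turn (edge to `(n+1, kv x n)`), a larger label
is a right turn (edge to `(n+1, kv x n + 1)`). -/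
def kv (x : EulerPath) : ℕ → ℕ
  | 0 => 0
  | n + 1 => if (x n : ℕ) ≤ kv x n then kv x n else kv x n + 1

/-- The symmetric measure: the product over `n` of the uniform probability measures on
`Fin (n+2)`, characterized as the probability measure giving each cylinder of length `n`
the measure `∏_{i<n} 1/(i+2)`. -/
def IsSymmetricMeasure (η : Measure EulerPath) : Prop :=
  IsProbabilityMeasure η ∧
    ∀ (n : ℕ) (c : EulerPath),
      η {x | ∀ i < n, x i = c i} = ∏ i ∈ Finset.range n, ((i : ℝ≥0∞) + 2)⁻¹

/-- `u_n = 2 k_n - n` (an integer, viewed in `ℝ`). -/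
def u (n : ℕ) (x : EulerPath) : ℝ :=
  ((2 * (kv x n : ℤ) - (n : ℤ) : ℤ) : ℝ)

/-- `F_n`: the σ-algebra on `X` generated by the coordinates `x_0, …, x_{n-1}`. -/
def coordAlg (n : ℕ) : MeasurableSpace EulerPath :=
  ⨆ i : Fin n, MeasurableSpace.comap (fun x => x i) inferInstance

/-- The filtration `(F_n)` on `X`. -/
def coordFil : Filtration ℕ (inferInstance : MeasurableSpace EulerPath) where
  seq := coordAlg
  mono' := by
    intro i j hij
    exact iSup_le fun v => le_iSup_of_le (⟨v.1, lt_of_lt_of_le v.2 hij⟩ : Fin j) le_rfl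
  le' := fun i => iSup_le fun v => Measurable.comap_le (measurable_pi_apply _)

section EulerAux

/-! ### Auxiliary definitions -/

/-- The space of length-`n` prefixes. -/
abbrev Pref (n : ℕ) : Type := ∀ i : Fin n, Fin ((i : ℕ) + 2)

/-- Projection to the first `n` coordinates. -/
def proj (n : ℕ) (x : EulerPath) : Pref n := fun i => x i

/-- Extend a prefix by zeros. -/
def ext0 (n : ℕ) (c : Pref n) : EulerPath := fun i =>
  if h : i < n then c ⟨i, h⟩ else 0

lemma ext0_eq {n : ℕ} (c : Pref n) {i : ℕ} (h : i < n) : ext0 n c i = c ⟨i, h⟩ := by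
  simp [ext0, h]

lemma kv_prefix : ∀ (n : ℕ) (x y : EulerPath), (∀ i < n, x i = y i) → kv x n = kv y n := by
  intro n
  induction n with
  | zero => intro x y _; rfl
  | succ m ih =>
    intro x y h
    have h1 : kv x m = kv y m := ih x y fun i hi => h i (by omega)
    have h2 : x m = y m := h m (by omega)
    simp only [kv, h1, h2]

lemma kv_le (x : EulerPath) : ∀ n, kv x n ≤ n := by
  intro n
  induction n with
  | zero => simp [kv]
  | succ m ih =>
    simp only [kv]
    split <;> omega

lemma u_prefix {n : ℕ} {x y : EulerPath} (h : ∀ i < n, x i = y i) : u n x = u n y := by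
  simp [u, kv_prefix n x y h]

/-- `coordAlg n` is the comap of the projection. -/
lemma coordAlg_eq (n : ℕ) :
    coordAlg n = MeasurableSpace.comap (proj n) inferInstance := by
  have hpi : (inferInstance : MeasurableSpace (Pref n)) =
      ⨆ i : Fin n, MeasurableSpace.comap (fun c : Pref n => c i) inferInstance := rfl
  rw [coordAlg, hpi, MeasurableSpace.comap_iSup]
  simp only [MeasurableSpace.comap_comp]
  rfl

/-- Any function determined by the first `n` coordinates is `coordAlg n`-measurable. -/
lemma measurable_of_prefix {α : Type*} [MeasurableSpace α] {n : ℕ} {f : EulerPath → α}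
    (hf : ∀ x y, (∀ i < n, x i = y i) → f x = f y) : Measurable[coordAlg n] f := by
  have hfactor : f = (fun c : Pref n => f (ext0 n c)) ∘ proj n := by
    funext x
    exact hf x (ext0 n (proj n x)) fun i hi => by simp [ext0, proj, hi]
  rw [hfactor, coordAlg_eq]
  exact (measurable_of_countable _).comp (Measurable.of_comap_le le_rfl)

lemma measurable_u (n : ℕ) : Measurable[coordAlg n] (u n) :=
  measurable_of_prefix fun _ _ h => u_prefix h

lemma measurable_u' (n : ℕ) : Measurable (u n) :=
  (measurable_u n).mono (coordFil.le n) le_rfl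

/-- Cylinder sets are measurable. -/
lemma measurableSet_cyl (m : ℕ) (c : EulerPath) :
    MeasurableSet {x : EulerPath | ∀ i < m, x i = c i} := by
  have : {x : EulerPath | ∀ i < m, x i = c i} =
      ⋂ i ∈ Set.Iio m, (fun x : EulerPath => x i) ⁻¹' {c i} := by
    ext x; simp
  rw [this]
  exact MeasurableSet.biInter (Set.to_countable _) fun i _ =>
    measurable_pi_apply i (measurableSet_singleton _)

lemma fiber_eq (n : ℕ) (c : Pref n) :
    proj n ⁻¹' {c} = {x : EulerPath | ∀ i < n, x i = ext0 n c i} := by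
  ext x
  simp only [Set.mem_preimage, Set.mem_singleton_iff, Set.mem_setOf_eq, funext_iff]
  constructor
  · intro h i hi
    rw [ext0_eq c hi]; exact h ⟨i, hi⟩
  · intro h i
    have := h i i.isLt
    rwa [ext0_eq c i.isLt] at this

lemma integrable_u (η : Measure EulerPath) [IsProbabilityMeasure η] (m : ℕ) :
    MeasureTheory.Integrable (u m) η := by
  refine MeasureTheory.Integrable.mono' (g := fun _ => (m : ℝ))
    (MeasureTheory.integrable_const _) (measurable_u' m).aestronglyMeasurable ?_
  filter_upwards with x
  have hk : (kv x m : ℝ) ≤ m := by exact_mod_cast kv_le x m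
  have hk0 : (0 : ℝ) ≤ (kv x m : ℝ) := by positivity
  rw [u, Real.norm_eq_abs, abs_le]
  push_cast
  constructor <;> linarith

lemma toReal_prod_cyl (m : ℕ) :
    (∏ i ∈ Finset.range m, ((i : ℝ≥0∞) + 2)⁻¹).toReal =
      ∏ i ∈ Finset.range m, ((i : ℝ) + 2)⁻¹ := by
  rw [ENNReal.toReal_prod]
  refine Finset.prod_congr rfl fun i _ => ?_
  rw [ENNReal.toReal_inv]
  norm_num [ENNReal.toReal_add]

end EulerAux


lemma sum_ite_le_real {k m : ℕ} (hk : k + 1 ≤ m) (a b : ℝ) :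
    ∑ i ∈ Finset.range m, (if i ≤ k then a else b)
      = ((k : ℝ) + 1) * a + ((m : ℝ) - ((k : ℝ) + 1)) * b := by
  rw [Finset.sum_ite]
  have h1 : Finset.filter (fun i => i ≤ k) (Finset.range m) = Finset.range (k + 1) := by
    ext i; simp only [Finset.mem_filter, Finset.mem_range]; omega
  have h2 : Finset.filter (fun i => ¬ i ≤ k) (Finset.range m) = Finset.Ico (k + 1) m := by
    ext i; simp only [Finset.mem_filter, Finset.mem_range, Finset.mem_Ico]; omega
  rw [h1, h2, Finset.sum_const, Finset.sum_const, Finset.card_range, Nat.card_Ico,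
    nsmul_eq_mul, nsmul_eq_mul]
  have : ((m - (k + 1) : ℕ) : ℝ) = (m : ℝ) - ((k : ℝ) + 1) := by
    rw [Nat.cast_sub hk]; push_cast; ring
  rw [this]; push_cast; ring

lemma cyl_integral_eq (η : Measure EulerPath) (hη : IsSymmetricMeasure η) (n : ℕ) (c : Pref n) :
    ∫ x in proj n ⁻¹' {c}, (((n : ℝ) + 1) / ((n : ℝ) + 2)) * u n x ∂η
      = ∫ x in proj n ⁻¹' {c}, u (n + 1) x ∂η := by
  classical
  obtain ⟨hprob, hcyl⟩ := hη
  set ce : EulerPath := ext0 n c with hcedef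
  set k : ℕ := kv ce n with hkdef
  have hkn : k ≤ n := kv_le ce n
  rw [fiber_eq]
  set S : Set EulerPath := {x : EulerPath | ∀ i < n, x i = ce i} with hSdef
  have hS : MeasurableSet S := measurableSet_cyl n ce
  -- the subcylinders
  set Sj : Fin (n + 2) → Set EulerPath :=
    fun j => {x : EulerPath | ∀ i < n + 1, x i = Function.update ce n j i} with hSjdef
  have hSjmeas : ∀ j, MeasurableSet (Sj j) := fun j => measurableSet_cyl (n + 1) _
  have hxn : ∀ j, ∀ x ∈ Sj j, x n = j := by
    intro j x hx
    have := hx n (by omega)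
    rwa [Function.update_self] at this
  have hdisj : Pairwise (Function.onFun Disjoint Sj) := by
    intro j j' hne
    rw [Function.onFun, Set.disjoint_left]
    intro x hx hx'
    exact hne ((hxn j x hx).symm.trans (hxn j' x hx'))
  have hcup : S = ⋃ j, Sj j := by
    ext x
    simp only [hSdef, hSjdef, Set.mem_iUnion, Set.mem_setOf_eq]
    constructor
    · intro h
      refine ⟨x n, fun i hi => ?_⟩
      rcases (by omega : i < n ∨ i = n) with hi' | rfl
      · rw [Function.update_of_ne (by omega)]; exact h i hi'
      · rw [Function.update_self]
    · rintro ⟨j, hj⟩ i hi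
      have := hj i (by omega)
      rwa [Function.update_of_ne (by omega)] at this
  -- LHS
  have hLHS : ∫ x in S, (((n : ℝ) + 1) / ((n : ℝ) + 2)) * u n x ∂η
      = (η S).toReal • ((((n : ℝ) + 1) / ((n : ℝ) + 2)) * u n ce) := by
    rw [setIntegral_congr_fun (g := fun _ => (((n : ℝ) + 1) / ((n : ℝ) + 2)) * u n ce) hS
      (fun x hx => by rw [u_prefix hx]), setIntegral_const]; rfl
  -- RHS
  have hconst : ∀ j, ∫ x in Sj j, u (n + 1) x ∂η
      = (η (Sj j)).toReal • u (n + 1) (Function.update ce n j) := by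
    intro j
    rw [setIntegral_congr_fun (g := fun _ => u (n + 1) (Function.update ce n j)) (hSjmeas j)
      (fun x hx => u_prefix hx), setIntegral_const]; rfl
  have hRHS : ∫ x in S, u (n + 1) x ∂η = ∑ j : Fin (n + 2),
      (η (Sj j)).toReal • u (n + 1) (Function.update ce n j) := by
    rw [hcup, MeasureTheory.integral_iUnion hSjmeas hdisj
      ((integrable_u η (n + 1)).integrableOn), tsum_fintype]
    exact Finset.sum_congr rfl fun j _ => hconst j
  rw [hLHS, hRHS]
  -- measures
  have hmS : (η S).toReal = ∏ i ∈ Finset.range n, ((i : ℝ) + 2)⁻¹ := by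
    rw [hSdef, hcyl n ce, toReal_prod_cyl]
  have hmSj : ∀ j, (η (Sj j)).toReal
      = (∏ i ∈ Finset.range n, ((i : ℝ) + 2)⁻¹) * ((n : ℝ) + 2)⁻¹ := by
    intro j
    rw [hSjdef, hcyl (n + 1) _, toReal_prod_cyl, Finset.prod_range_succ]
  -- kv values on subcylinders
  have hkv1 : ∀ j : Fin (n + 2), kv (Function.update ce n j) (n + 1)
      = if (j : ℕ) ≤ k then k else k + 1 := by
    intro j
    have h0 : kv (Function.update ce n j) n = k :=
      kv_prefix n _ ce fun i hi => Function.update_of_ne (by omega) _ _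
    simp only [kv, h0, Function.update_self]
  have huval : ∀ j : Fin (n + 2), u (n + 1) (Function.update ce n j)
      = if (j : ℕ) ≤ k then 2 * (k : ℝ) - ((n : ℝ) + 1)
        else 2 * ((k : ℝ) + 1) - ((n : ℝ) + 1) := by
    intro j
    rw [u, hkv1 j]
    split <;> push_cast <;> ring
  have huc : u n ce = 2 * (k : ℝ) - (n : ℝ) := by rw [u]; push_cast; ring
  simp only [huval, hmSj, hmS, huc, smul_eq_mul]
  rw [Fin.sum_univ_eq_sum_range
    (fun i : ℕ => (∏ i ∈ Finset.range n, ((i : ℝ) + 2)⁻¹) * ((n : ℝ) + 2)⁻¹ *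
      (if i ≤ k then 2 * (k : ℝ) - ((n : ℝ) + 1) else 2 * ((k : ℝ) + 1) - ((n : ℝ) + 1)))]
  rw [← Finset.mul_sum, sum_ite_le_real (by omega)]
  have hkR : (k : ℝ) ≤ (n : ℝ) := by exact_mod_cast hkn
  have h2 : ((n : ℝ) + 2) ≠ 0 := by positivity
  push_cast
  field_simp
  ring

theorem euler_u_condexp'
    (η : Measure EulerPath) (hη : IsSymmetricMeasure η) (n : ℕ) :
    MeasureTheory.condExp (coordAlg n) η (u (n + 1)) =ᵐ[η]
      fun x => (((n : ℝ) + 1) / ((n : ℝ) + 2)) * u n x := by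
  classical
  haveI : IsProbabilityMeasure η := hη.1
  have hm : coordAlg n ≤ (inferInstance : MeasurableSpace EulerPath) := coordFil.le n
  haveI : SigmaFinite (η.trim hm) := inferInstance
  have hgmeas : Measurable[coordAlg n]
      (fun x => (((n : ℝ) + 1) / ((n : ℝ) + 2)) * u n x) := (measurable_u n).const_mul _
  have hgm : AEStronglyMeasurable[coordAlg n]
      (fun x => (((n : ℝ) + 1) / ((n : ℝ) + 2)) * u n x) η :=
    hgmeas.stronglyMeasurable.aestronglyMeasurable
  have hgint : Integrable (fun x => (((n : ℝ) + 1) / ((n : ℝ) + 2)) * u n x) η :=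
    (integrable_u η n).const_mul _
  have huint : Integrable (u (n + 1)) η := integrable_u η (n + 1)
  refine (ae_eq_condExp_of_forall_setIntegral_eq hm huint
    (fun s _ _ => hgint.integrableOn) ?_ hgm).symm
  intro s hs _
  rw [coordAlg_eq] at hs
  obtain ⟨t, -, rfl⟩ := hs
  have htf : (proj n ⁻¹' t) = ⋃ c ∈ (Set.toFinite t).toFinset, proj n ⁻¹' {c} := by
    ext x
    simp only [Set.mem_preimage, Set.mem_iUnion, Set.Finite.mem_toFinset,
      Set.mem_singleton_iff]
    exact ⟨fun h => ⟨_, h, rfl⟩, fun ⟨c, hc, he⟩ => he ▸ hc⟩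
  have hfib_meas : ∀ c : Pref n, MeasurableSet (proj n ⁻¹' {c}) := fun c => by
    rw [fiber_eq]; exact measurableSet_cyl n _
  have hdisj : Set.Pairwise ↑(Set.toFinite t).toFinset
      (Function.onFun Disjoint fun c => proj n ⁻¹' {c}) := fun c _ c' _ hne =>
    Disjoint.preimage _ (Set.disjoint_singleton.mpr hne)
  rw [htf,
    MeasureTheory.integral_biUnion_finset _ (fun c _ => hfib_meas c) hdisj
      (fun c _ => hgint.integrableOn),
    MeasureTheory.integral_biUnion_finset _ (fun c _ => hfib_meas c) hdisj
      (fun c _ => huint.integrableOn)]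
  exact Finset.sum_congr rfl fun c _ => cyl_integral_eq η hη n c


/-- `η`-almost everywhere, `E_η[u_{n+1} | F_n] = ((n+1)/(n+2)) · u_n`. -/
theorem euler_u_condexp
    (η : Measure EulerPath) (hη : IsSymmetricMeasure η) (n : ℕ) :
    MeasureTheory.condExp (coordAlg n) η (u (n + 1)) =ᵐ[η]
      fun x => (((n : ℝ) + 1) / ((n : ℝ) + 2)) * u n x := by
  exact euler_u_condexp' η hη n
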